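/- Let m, n ∈ ℕ with 2 ≤ m ≤ n and let ρ_{m,n,max} = (1/m) ∑_{i,j=1}^m e_{ij} ⊗ f_{ij} in M_m ⊗ M_n, where {e_{ij}} and {f_{ij}} are the matrix units of M_m and M_n respectively. Then ρ_{m,n,max} is an m⊗n state with N(ρ_{m,n,max}) = 1 and D(ρ_{m,n,max}) = 1; consequently N(ρ_{m,n,max})² − D(ρ_{m,n,max}) = 0. -/

import Mathlib

open Matrix BigOperators Polynomial
open scoped Kronecker ComplexOrder

noncomputable section

/-- Squared Hilbert–Schmidt norm `‖C‖² = Tr(CᴴC)`. -/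
def hsNormSq {d : Type*} [Fintype d] (C : Matrix d d ℂ) : ℝ :=
  (Matrix.trace (Cᴴ * C)).re

/-- Trace norm `‖X‖₁ = Tr √(XᴴX)`. -/
def traceNorm {d : Type*} [Fintype d] [DecidableEq d] (X : Matrix d d ℂ) : ℝ :=
  (((Matrix.posSemidef_conjTranspose_mul_self X).isHermitian.eigenvectorUnitary : Matrix d d ℂ) *
    diagonal (((↑) : ℝ → ℂ) ∘ (√·) ∘ (Matrix.posSemidef_conjTranspose_mul_self X).isHermitian.eigenvalues) *
    (star (Matrix.posSemidef_conjTranspose_mul_self X).isHermitian.eigenvectorUnitary :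
      Matrix d d ℂ)).trace.re

/-- Partial transpose on the first factor: `ρ^Γ((i,k),(j,l)) = ρ((j,k),(i,l))`. -/
def ptranspose {m n : ℕ} (ρ : Matrix (Fin m × Fin n) (Fin m × Fin n) ℂ) :
    Matrix (Fin m × Fin n) (Fin m × Fin n) ℂ :=
  Matrix.of fun p q => ρ (q.1, p.2) (p.1, q.2)

/-- Negativity `N(ρ) = (‖ρ^Γ‖₁ - 1)/(m-1)`. -/
def negativity {m n : ℕ} (ρ : Matrix (Fin m × Fin n) (Fin m × Fin n) ℂ) : ℝ :=
  (traceNorm (ptranspose ρ) - 1) / ((m : ℝ) - 1)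

/-- `ψ` is an orthonormal basis of `ℂ^m` (an orthonormal family of `m` vectors). -/
def IsONB {m : ℕ} (ψ : Fin m → (Fin m → ℂ)) : Prop :=
  ∀ k l, (∑ i, star (ψ k i) * ψ l i) = if k = l then 1 else 0

/-- The rank-one projector `|v⟩⟨v|`. -/
def proj {m : ℕ} (v : Fin m → ℂ) : Matrix (Fin m) (Fin m) ℂ :=
  Matrix.vecMulVec v (fun j => star (v j))

/-- The von Neumann measurement map
`Π^A(ρ) = ∑ k, (|ψ_k⟩⟨ψ_k| ⊗ I_n) ρ (|ψ_k⟩⟨ψ_k| ⊗ I_n)`. -/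
def piA {m n : ℕ} (ψ : Fin m → (Fin m → ℂ))
    (ρ : Matrix (Fin m × Fin n) (Fin m × Fin n) ℂ) :
    Matrix (Fin m × Fin n) (Fin m × Fin n) ℂ :=
  ∑ k, (proj (ψ k) ⊗ₖ (1 : Matrix (Fin n) (Fin n) ℂ)) * ρ *
       (proj (ψ k) ⊗ₖ (1 : Matrix (Fin n) (Fin n) ℂ))

/-- Geometric discord
`D(ρ) = (m/(m-1)) · inf over von Neumann measurements of ‖ρ - Π^A(ρ)‖²`. -/
def gd {m n : ℕ} (ρ : Matrix (Fin m × Fin n) (Fin m × Fin n) ℂ) : ℝ :=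
  ((m : ℝ) / ((m : ℝ) - 1)) *
    ⨅ ψ : {ψ : Fin m → (Fin m → ℂ) // IsONB ψ}, hsNormSq (ρ - piA ψ.1 ρ)

/-- An `m ⊗ n` state: positive semidefinite with trace one. -/
def IsState {m n : ℕ} (ρ : Matrix (Fin m × Fin n) (Fin m × Fin n) ℂ) : Prop :=
  ρ.PosSemidef ∧ ρ.trace = 1

/-- Reindex a `6 × 6` matrix by `Fin 2 × Fin 3` with the ordering
`(1,1),(1,2),(1,3),(2,1),(2,2),(2,3)`. -/
def ofM6 (M : Matrix (Fin 6) (Fin 6) ℂ) :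
    Matrix (Fin 2 × Fin 3) (Fin 2 × Fin 3) ℂ :=
  Matrix.of fun p q =>
    M ⟨p.1.val * 3 + p.2.val, by have := p.1.isLt; have := p.2.isLt; omega⟩
      ⟨q.1.val * 3 + q.2.val, by have := q.1.isLt; have := q.2.isLt; omega⟩

/-- The family of states `ρ₁(a,b)`. -/
def rho1 (a b : ℝ) : Matrix (Fin 2 × Fin 3) (Fin 2 × Fin 3) ℂ :=
  ofM6 ((1 / (2 * ((a : ℂ)^2 + (b : ℂ)^2))) •
    !![(a:ℂ)^2, 0, 0, 0, (a:ℂ)*(b:ℂ), 0;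
       0, (b:ℂ)^2, 0, 0, 0, (a:ℂ)*(b:ℂ);
       0, 0, 0, 0, 0, 0;
       0, 0, 0, 0, 0, 0;
       (a:ℂ)*(b:ℂ), 0, 0, 0, (b:ℂ)^2, 0;
       0, (a:ℂ)*(b:ℂ), 0, 0, 0, (a:ℂ)^2])

namespace Stmt7Aux

variable {m n : ℕ}

def u (hmn : m ≤ n) : Fin m × Fin n → ℂ := fun p => if p.2 = Fin.castLE hmn p.1 then 1 else 0

lemma star_u (hmn : m ≤ n) (p) : star (u hmn p) = u hmn p := by
  simp [u, apply_ite (star : ℂ → ℂ)]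

lemma sum_u (hmn : m ≤ n) (f : Fin m × Fin n → ℂ) :
    ∑ p, u hmn p * f p = ∑ i, f (i, Fin.castLE hmn i) := by
  rw [Fintype.sum_prod_type]
  simp [u, ite_mul, Finset.sum_ite_eq']

lemma sum_pair (hmn : m ≤ n) (i i' : Fin m) :
    ∑ a : Fin n, (if a = Fin.castLE hmn i then (1:ℂ) else 0) *
      (if a = Fin.castLE hmn i' then 1 else 0) = if i = i' then 1 else 0 := by
  simp only [ite_mul, one_mul, zero_mul, Finset.sum_ite_eq', Finset.mem_univ, if_true,
    Fin.castLE_inj]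

lemma sum_pair' (hmn : m ≤ n) (a b : Fin n) :
    ∑ j : Fin m, (if a = Fin.castLE hmn j then (1:ℂ) else 0) *
      (if b = Fin.castLE hmn j then 1 else 0)
      = if a = b ∧ (a:ℕ) < m then 1 else 0 := by
  by_cases h : (a:ℕ) < m
  · have key : ∀ j : Fin m, (if a = Fin.castLE hmn j then (1:ℂ) else 0)
        = if j = ⟨a, h⟩ then 1 else 0 := by
      intro j
      congr 1
      simp only [eq_iff_iff, Fin.ext_iff, Fin.coe_castLE]
      constructor <;> omega
    simp only [key, ite_mul, one_mul, zero_mul, Finset.sum_ite_eq', Finset.mem_univ, if_true]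
    have hcast : (Fin.castLE hmn ⟨a, h⟩ : Fin n) = a := Fin.ext rfl
    rw [hcast]
    rcases eq_or_ne a b with rfl | hab
    · simp [h]
    · simp [hab, Ne.symm hab]
  · rw [if_neg (by tauto)]
    apply Finset.sum_eq_zero
    intro j _
    rw [if_neg, zero_mul]
    intro hj
    exact h (hj ▸ (by simpa using j.isLt))

lemma sum_ite_lt (hmn : m ≤ n) (c : ℂ) :
    ∑ a : Fin n, (if (a:ℕ) < m then c else 0) = m * c := by
  have key : ∀ a : Fin n, (if (a:ℕ) < m then c else 0)
      = ∑ j : Fin m, if a = Fin.castLE hmn j then c else 0 := by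
    intro a
    by_cases h : (a:ℕ) < m
    · rw [if_pos h, Finset.sum_eq_single ⟨a, h⟩]
      · rw [if_pos (show a = Fin.castLE hmn ⟨a, h⟩ from Fin.ext rfl)]
      · intro j _ hj
        rw [if_neg]
        intro hx
        exact hj (Fin.ext (by simp [Fin.ext_iff] at hx ⊢; omega))
      · simp
    · rw [if_neg h]
      symm; apply Finset.sum_eq_zero
      intro j _
      rw [if_neg]
      intro hj
      exact h (hj ▸ (by simpa using j.isLt))
  simp only [key]
  rw [Finset.sum_comm]
  simp [Finset.sum_ite_eq', mul_comm]


def rhoM (hmn : m ≤ n) : Matrix (Fin m × Fin n) (Fin m × Fin n) ℂ :=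
  Matrix.of fun p q => (1/(m:ℂ)) * (u hmn p * u hmn q)

lemma rho_eq (hmn : m ≤ n) :
    (((1 : ℂ) / (m : ℂ)) • ∑ i : Fin m, ∑ j : Fin m,
      (Matrix.single i j (1 : ℂ)) ⊗ₖ
      (Matrix.single (Fin.castLE hmn i) (Fin.castLE hmn j) (1 : ℂ)))
    = rhoM hmn := by
  ext p q
  simp only [rhoM, Matrix.smul_apply, Matrix.sum_apply, Matrix.kroneckerMap_apply,
    Matrix.single, Matrix.of_apply, smul_eq_mul]
  rw [mul_eq_mul_left_iff]
  left
  have hterm : ∀ i j : Fin m,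
      (if i = p.1 ∧ j = q.1 then (1:ℂ) else 0) *
        (if Fin.castLE hmn i = p.2 ∧ Fin.castLE hmn j = q.2 then (1:ℂ) else 0)
      = if i = p.1 then (if j = q.1 then
          (if Fin.castLE hmn i = p.2 ∧ Fin.castLE hmn j = q.2 then (1:ℂ) else 0) else 0)
        else 0 := by
    intro i j
    by_cases h : i = p.1 <;> by_cases h' : j = q.1 <;> simp [h, h']
  simp only [hterm, Finset.sum_ite_eq', Finset.mem_univ, if_true]
  by_cases h1 : p.2 = Fin.castLE hmn p.1 <;> by_cases h2 : q.2 = Fin.castLE hmn q.1 <;>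
    simp [u, h1, h2, eq_comm]

lemma star_rhoM (hmn : m ≤ n) (p q) : star (rhoM hmn p q) = rhoM hmn p q := by
  simp only [rhoM, Matrix.of_apply, star_mul', star_u, star_div₀, star_one, star_natCast]

lemma posSemidef_rhoM (hm : 2 ≤ m) (hmn : m ≤ n) : (rhoM hmn).PosSemidef := by
  have hm0 : (0:ℝ) < m := by positivity
  set A : Matrix (Fin 1) (Fin m × Fin n) ℂ :=
    Matrix.of fun _ p => ((Real.sqrt (1/m) : ℝ) : ℂ) * u hmn p with hA
  have : rhoM hmn = Aᴴ * A := by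
    ext p q
    simp only [rhoM, Matrix.mul_apply, Matrix.conjTranspose_apply, hA, Matrix.of_apply,
      Fin.sum_univ_one, star_mul', star_u, Complex.star_def, Complex.conj_ofReal]
    have : ((Real.sqrt (1/m) : ℝ) : ℂ) * ((Real.sqrt (1/m) : ℝ) : ℂ) = (1/(m:ℂ)) := by
      rw [← Complex.ofReal_mul, Real.mul_self_sqrt (by positivity)]
      push_cast
      ring
    rw [← this]
    ring
  rw [this]
  exact Matrix.posSemidef_conjTranspose_mul_self A

lemma trace_rhoM (hm : 2 ≤ m) (hmn : m ≤ n) : (rhoM hmn).trace = 1 := by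
  have hm0 : ((m:ℂ)) ≠ 0 := Nat.cast_ne_zero.mpr (by omega)
  rw [Matrix.trace]
  simp only [Matrix.diag, rhoM, Matrix.of_apply]
  rw [← Finset.mul_sum]
  have : ∑ p : Fin m × Fin n, u hmn p * u hmn p = ∑ i : Fin m, u hmn (i, Fin.castLE hmn i) :=
    sum_u hmn _
  rw [this]
  simp [u]
  field_simp


def dfun (hmn : m ≤ n) : Fin m × Fin n → ℂ := fun p => if (p.2:ℕ) < m then (1/(m:ℂ)) else 0

lemma dfun_nonneg (hmn : m ≤ n) (p) : 0 ≤ dfun hmn p := by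
  unfold dfun
  by_cases h : (p.2:ℕ) < m
  · rw [if_pos h, show (1/(m:ℂ)) = (((1/(m:ℝ)):ℝ):ℂ) by push_cast; ring]
    exact Complex.zero_le_real.mpr (by positivity)
  · rw [if_neg h]

lemma sigma_herm_mul (hmn : m ≤ n) (p q : Fin m × Fin n) :
    ((ptranspose (rhoM hmn))ᴴ * ptranspose (rhoM hmn)) p q
    = (1/(m:ℂ)) * (1/m) *
      ((if p.1 = q.1 then 1 else 0) * (if p.2 = q.2 ∧ (p.2:ℕ) < m then 1 else 0)) := by
  rw [Matrix.mul_apply, Fintype.sum_prod_type, Finset.sum_comm,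
    ← sum_pair hmn p.1 q.1, ← sum_pair' hmn p.2 q.2, Finset.sum_mul_sum, Finset.mul_sum]
  refine Finset.sum_congr rfl fun a _ => ?_
  rw [Finset.mul_sum]
  refine Finset.sum_congr rfl fun j _ => ?_
  rw [Matrix.conjTranspose_apply, show (ptranspose (rhoM hmn)) (j, a) p
      = rhoM hmn (p.1, a) (j, p.2) from rfl,
    show (ptranspose (rhoM hmn)) (j, a) q = rhoM hmn (q.1, a) (j, q.2) from rfl, star_rhoM]
  simp only [rhoM, Matrix.of_apply, u]
  ring

lemma sq_dfun (hmn : m ≤ n) :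
    (Matrix.diagonal (dfun hmn)) ^ 2 = (ptranspose (rhoM hmn))ᴴ * ptranspose (rhoM hmn) := by
  rw [pow_two, Matrix.diagonal_mul_diagonal]
  ext p q
  rw [sigma_herm_mul hmn p q, Matrix.diagonal_apply]
  by_cases h1 : p.1 = q.1 <;> by_cases h2 : p.2 = q.2 <;> by_cases h3 : (p.2:ℕ) < m <;>
    simp [Prod.ext_iff, h1, h2, h3, dfun]
  all_goals intro h
  all_goals omega

open scoped MatrixOrder in
lemma sqrt_aux {d : Type*} [Fintype d] [DecidableEq d] (X D : Matrix d d ℂ) (hD : D.PosSemidef)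
    (h : D ^ 2 = Xᴴ * X) :
    (((Matrix.posSemidef_conjTranspose_mul_self X).isHermitian.eigenvectorUnitary : Matrix d d ℂ) *
      diagonal (((↑) : ℝ → ℂ) ∘ (√·) ∘ (Matrix.posSemidef_conjTranspose_mul_self X).isHermitian.eigenvalues) *
      (star (Matrix.posSemidef_conjTranspose_mul_self X).isHermitian.eigenvectorUnitary :
        Matrix d d ℂ)) = D := by
  have e := (Matrix.posSemidef_conjTranspose_mul_self X).isHermitian.cfc_eq Real.sqrt
  rw [IsHermitian.cfc, Unitary.conjStarAlgAut_apply] at e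
  refine e.symm.trans ?_
  rw [← h, ← cfcₙ_eq_cfc, ← CFC.sqrt_eq_real_sqrt _ (hD.pow 2).nonneg, CFC.sqrt_sq D hD.nonneg]

lemma traceNorm_pt (hm : 2 ≤ m) (hmn : m ≤ n) :
    traceNorm (ptranspose (rhoM hmn)) = m := by
  have hm0 : ((m:ℂ)) ≠ 0 := Nat.cast_ne_zero.mpr (by omega)
  have hD : (Matrix.diagonal (dfun hmn)).PosSemidef :=
    Matrix.posSemidef_diagonal_iff.mpr (dfun_nonneg hmn)
  have hs := sqrt_aux (ptranspose (rhoM hmn)) _ hD (sq_dfun hmn)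
  rw [traceNorm, hs, Matrix.trace_diagonal]
  have : ∑ p : Fin m × Fin n, dfun hmn p = (m:ℂ) := by
    rw [Fintype.sum_prod_type]
    simp only [dfun]
    rw [Finset.sum_congr rfl fun i _ => sum_ite_lt hmn (1/(m:ℂ))]
    rw [Finset.sum_const]
    simp
    field_simp
  rw [this]
  simp


/-! ### gd machinery -/

def gv (hmn : m ≤ n) (ψ : Fin m → Fin m → ℂ) (k : Fin m) (p : Fin m × Fin n) : ℂ :=
  ∑ i : Fin m, ψ k p.1 * star (ψ k i) * (if p.2 = Fin.castLE hmn i then 1 else 0)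

def hv (hmn : m ≤ n) (ψ : Fin m → Fin m → ℂ) (k : Fin m) (q : Fin m × Fin n) : ℂ :=
  ∑ j : Fin m, star (ψ k q.1) * ψ k j * (if q.2 = Fin.castLE hmn j then 1 else 0)

lemma star_gv (hmn : m ≤ n) (ψ : Fin m → Fin m → ℂ) (k : Fin m) (p : Fin m × Fin n) :
    star (gv hmn ψ k p)
      = ∑ i : Fin m, star (ψ k p.1) * ψ k i * (if p.2 = Fin.castLE hmn i then 1 else 0) := by
  unfold gv
  rw [star_sum]
  refine Finset.sum_congr rfl fun i _ => ?_
  simp only [star_mul', apply_ite (star : ℂ → ℂ), star_one, star_zero, star_star]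

lemma star_hv (hmn : m ≤ n) (ψ : Fin m → Fin m → ℂ) (k : Fin m) (q : Fin m × Fin n) :
    star (hv hmn ψ k q)
      = ∑ j : Fin m, ψ k q.1 * star (ψ k j) * (if q.2 = Fin.castLE hmn j then 1 else 0) := by
  unfold hv
  rw [star_sum]
  refine Finset.sum_congr rfl fun j _ => ?_
  simp only [star_mul', apply_ite (star : ℂ → ℂ), star_one, star_zero, star_star]

lemma pairing_u (hmn : m ≤ n) (f F : Fin m → ℂ) :
    ∑ p : Fin m × Fin n,
      u hmn p * (∑ i, f p.1 * F i * (if p.2 = Fin.castLE hmn i then 1 else 0))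
      = ∑ x, f x * F x := by
  rw [sum_u hmn]
  refine Finset.sum_congr rfl fun x _ => ?_
  simp [mul_ite, Fin.castLE_inj, Finset.sum_ite_eq']

lemma pairing (hmn : m ≤ n) (f F g G : Fin m → ℂ) :
    ∑ p : Fin m × Fin n,
      (∑ i, f p.1 * F i * (if p.2 = Fin.castLE hmn i then 1 else 0)) *
      (∑ i, g p.1 * G i * (if p.2 = Fin.castLE hmn i then 1 else 0))
      = (∑ x, f x * g x) * (∑ i, F i * G i) := by
  rw [Fintype.sum_prod_type]
  have inner : ∀ (x : Fin m) (a : Fin n),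
      (∑ i, f x * F i * (if a = Fin.castLE hmn i then (1:ℂ) else 0)) *
      (∑ i, g x * G i * (if a = Fin.castLE hmn i then 1 else 0))
      = ∑ i : Fin m, ∑ i' : Fin m, (f x * g x) * (F i * G i') *
          ((if a = Fin.castLE hmn i then 1 else 0) * (if a = Fin.castLE hmn i' then 1 else 0)) := by
    intro x a
    rw [Finset.sum_mul_sum]
    exact Finset.sum_congr rfl fun i _ => Finset.sum_congr rfl fun i' _ => by ring
  simp_rw [inner]
  have swap1 : ∀ x : Fin m,
      ∑ a : Fin n, ∑ i : Fin m, ∑ i' : Fin m, (f x * g x) * (F i * G i') *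
          ((if a = Fin.castLE hmn i then (1:ℂ) else 0) * (if a = Fin.castLE hmn i' then 1 else 0))
      = ∑ i : Fin m, ∑ i' : Fin m, (f x * g x) * (F i * G i') * (if i = i' then 1 else 0) := by
    intro x
    rw [Finset.sum_comm]
    refine Finset.sum_congr rfl fun i _ => ?_
    rw [Finset.sum_comm]
    refine Finset.sum_congr rfl fun i' _ => ?_
    rw [← Finset.mul_sum, sum_pair hmn i i']
  simp_rw [swap1]
  have collapse : ∀ x : Fin m,
      ∑ i : Fin m, ∑ i' : Fin m, (f x * g x) * (F i * G i') * (if i = i' then (1:ℂ) else 0)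
      = (f x * g x) * ∑ i, F i * G i := by
    intro x
    rw [Finset.mul_sum]
    refine Finset.sum_congr rfl fun i _ => ?_
    simp [mul_ite, Finset.sum_ite_eq]
  simp_rw [collapse]
  rw [← Finset.sum_mul]

lemma sum_sum_factor (c : ℂ) (A B : Fin m × Fin n → ℂ) :
    ∑ p : Fin m × Fin n, ∑ q : Fin m × Fin n, c * (A p * B q)
      = c * ((∑ p, A p) * (∑ q, B q)) := by
  have h1 : ∀ p, ∑ q : Fin m × Fin n, c * (A p * B q) = c * A p * (∑ q, B q) := by
    intro p
    rw [Finset.mul_sum]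
    exact Finset.sum_congr rfl fun q _ => by ring
  simp_rw [h1]
  rw [Finset.sum_mul, Finset.mul_sum]
  exact Finset.sum_congr rfl fun p _ => by ring

lemma sum3_factor (c : ℂ) (A B : Fin m → (Fin m × Fin n) → ℂ) :
    ∑ p : Fin m × Fin n, ∑ q : Fin m × Fin n, ∑ k : Fin m, c * (A k p * B k q)
      = c * ∑ k, (∑ p, A k p) * (∑ q, B k q) := by
  have h0 : ∀ p : Fin m × Fin n, ∑ q : Fin m × Fin n, ∑ k : Fin m, c * (A k p * B k q)
      = ∑ k : Fin m, ∑ q : Fin m × Fin n, c * (A k p * B k q) := fun p => Finset.sum_comm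
  simp_rw [h0]
  rw [Finset.sum_comm]
  rw [Finset.mul_sum]
  refine Finset.sum_congr rfl fun k _ => ?_
  exact sum_sum_factor c (A k) (B k)

lemma sum4_factor (c : ℂ) (A B : Fin m → Fin m → (Fin m × Fin n) → ℂ) :
    ∑ p : Fin m × Fin n, ∑ q : Fin m × Fin n, ∑ l : Fin m, ∑ k : Fin m, c * (A l k p * B l k q)
      = c * ∑ l, ∑ k, (∑ p, A l k p) * (∑ q, B l k q) := by
  have h0 : ∀ p : Fin m × Fin n, ∑ q : Fin m × Fin n, ∑ l : Fin m, ∑ k : Fin m, c * (A l k p * B l k q)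
      = ∑ l : Fin m, ∑ q : Fin m × Fin n, ∑ k : Fin m, c * (A l k p * B l k q) := fun p => Finset.sum_comm
  have h1 : ∀ p : Fin m × Fin n, ∀ l : Fin m, ∑ q : Fin m × Fin n, ∑ k : Fin m, c * (A l k p * B l k q)
      = ∑ k : Fin m, ∑ q : Fin m × Fin n, c * (A l k p * B l k q) := fun p l => Finset.sum_comm
  simp_rw [h0, h1]
  rw [Finset.sum_comm]
  rw [Finset.mul_sum]
  refine Finset.sum_congr rfl fun l _ => ?_
  have h2 : ∀ p : Fin m × Fin n, ∑ k : Fin m, ∑ q : Fin m × Fin n, c * (A l k p * B l k q)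
      = ∑ k : Fin m, ∑ q : Fin m × Fin n, c * (A l k p * B l k q) := fun _ => rfl
  rw [Finset.sum_comm]
  rw [Finset.mul_sum]
  refine Finset.sum_congr rfl fun k _ => ?_
  exact sum_sum_factor c (A l k) (B l k)


lemma piA_apply (hmn : m ≤ n) (ψ : Fin m → Fin m → ℂ) (p q : Fin m × Fin n) :
    piA ψ (rhoM hmn) p q = (1/(m:ℂ)) * ∑ k, gv hmn ψ k p * hv hmn ψ k q := by
  rw [piA, Matrix.sum_apply, Finset.mul_sum]
  refine Finset.sum_congr rfl fun k _ => ?_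
  rw [Matrix.mul_apply]
  have hAB : ∀ s : Fin m × Fin n,
      ((proj (ψ k) ⊗ₖ (1 : Matrix (Fin n) (Fin n) ℂ)) * rhoM hmn) p s
      = (1/(m:ℂ)) * gv hmn ψ k p * u hmn s := by
    intro s
    rw [Matrix.mul_apply, Fintype.sum_prod_type]
    conv_rhs => rw [gv]
    rw [Finset.mul_sum, Finset.sum_mul]
    refine Finset.sum_congr rfl fun r1 _ => ?_
    simp only [Matrix.kroneckerMap_apply, Matrix.one_apply, rhoM, Matrix.of_apply, proj,
      Matrix.vecMulVec_apply, u, mul_ite, ite_mul, mul_zero, zero_mul, mul_one, one_mul,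
      Finset.sum_ite_eq, Finset.mem_univ, if_true]
    by_cases h1 : p.2 = Fin.castLE hmn r1 <;>
      by_cases h2 : s.2 = Fin.castLE hmn s.1 <;> simp [h1, h2] <;> ring
  simp_rw [hAB]
  have step : ∑ s : Fin m × Fin n,
      (1/(m:ℂ)) * gv hmn ψ k p * u hmn s * ((proj (ψ k) ⊗ₖ (1 : Matrix (Fin n) (Fin n) ℂ)) s q)
      = (1/(m:ℂ)) * gv hmn ψ k p *
        ∑ s : Fin m × Fin n, u hmn s * ((proj (ψ k) ⊗ₖ (1 : Matrix (Fin n) (Fin n) ℂ)) s q) := by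
    rw [Finset.mul_sum]
    exact Finset.sum_congr rfl fun s _ => by ring
  rw [step, sum_u hmn (fun s => (proj (ψ k) ⊗ₖ (1 : Matrix (Fin n) (Fin n) ℂ)) s q)]
  have hj : ∀ j : Fin m,
      ((proj (ψ k) ⊗ₖ (1 : Matrix (Fin n) (Fin n) ℂ)) (j, Fin.castLE hmn j) q)
      = star (ψ k q.1) * ψ k j * (if q.2 = Fin.castLE hmn j then 1 else 0) := by
    intro j
    simp only [Matrix.kroneckerMap_apply, Matrix.one_apply, proj, Matrix.vecMulVec_apply]
    by_cases h : q.2 = Fin.castLE hmn j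
    · rw [if_pos h.symm, if_pos h]; ring
    · rw [if_neg (fun hh => h hh.symm), if_neg h]; ring
  simp_rw [hj]
  rw [show hv hmn ψ k q
      = ∑ j : Fin m, star (ψ k q.1) * ψ k j * (if q.2 = Fin.castLE hmn j then 1 else 0) from rfl]
  ring


section ONB
variable {ψ : Fin m → Fin m → ℂ}

lemma onb2 (hψ : IsONB ψ) (k l : Fin m) :
    ∑ x, ψ k x * star (ψ l x) = if k = l then 1 else 0 := by
  have h1 : ∑ x, ψ k x * star (ψ l x) = ∑ x, star (ψ l x) * ψ k x :=
    Finset.sum_congr rfl fun x _ => mul_comm _ _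
  rw [h1, hψ l k]
  by_cases h : l = k
  · simp [h]
  · rw [if_neg h, if_neg (fun hh => h hh.symm)]

lemma sum_u_one (hmn : m ≤ n) : ∑ p : Fin m × Fin n, u hmn p = (m:ℂ) := by
  simpa using sum_u hmn (fun _ => (1:ℂ))

lemma T1 (hm : 2 ≤ m) (hmn : m ≤ n) :
    ∑ p : Fin m × Fin n, ∑ q : Fin m × Fin n, star (rhoM hmn q p) * rhoM hmn q p = 1 := by
  have hm0 : ((m:ℂ)) ≠ 0 := Nat.cast_ne_zero.mpr (by omega)
  have hterm : ∀ p q : Fin m × Fin n, star (rhoM hmn q p) * rhoM hmn q p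
      = ((1/(m:ℂ))*(1/m)) * (u hmn p * u hmn q) := by
    intro p q
    rw [star_rhoM]
    simp only [rhoM, Matrix.of_apply, u]
    by_cases h1 : q.2 = Fin.castLE hmn q.1 <;> by_cases h2 : p.2 = Fin.castLE hmn p.1 <;>
      simp [h1, h2] <;> ring
  simp_rw [hterm]
  rw [sum_sum_factor ((1/(m:ℂ))*(1/m)) (u hmn) (u hmn), sum_u_one hmn]
  field_simp

lemma e_hv (hmn : m ≤ n) (hψ : IsONB ψ) (k : Fin m) :
    ∑ p : Fin m × Fin n, u hmn p * hv hmn ψ k p = 1 := by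
  rw [show (∑ p : Fin m × Fin n, u hmn p * hv hmn ψ k p)
      = ∑ p : Fin m × Fin n, u hmn p * (∑ j, star (ψ k p.1) * ψ k j *
        (if p.2 = Fin.castLE hmn j then 1 else 0)) from rfl,
    pairing_u hmn (fun x => star (ψ k x)) (ψ k), hψ k k, if_pos rfl]

lemma e_gv (hmn : m ≤ n) (hψ : IsONB ψ) (k : Fin m) :
    ∑ q : Fin m × Fin n, u hmn q * gv hmn ψ k q = 1 := by
  rw [show (∑ q : Fin m × Fin n, u hmn q * gv hmn ψ k q)
      = ∑ q : Fin m × Fin n, u hmn q * (∑ i, ψ k q.1 * star (ψ k i) *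
        (if q.2 = Fin.castLE hmn i then 1 else 0)) from rfl,
    pairing_u hmn (ψ k) (fun x => star (ψ k x)), onb2 hψ k k, if_pos rfl]

lemma e_shv (hmn : m ≤ n) (hψ : IsONB ψ) (k : Fin m) :
    ∑ p : Fin m × Fin n, u hmn p * star (hv hmn ψ k p) = 1 := by
  simp_rw [star_hv]
  rw [pairing_u hmn (ψ k) (fun x => star (ψ k x)), onb2 hψ k k, if_pos rfl]

lemma e_sgv (hmn : m ≤ n) (hψ : IsONB ψ) (k : Fin m) :
    ∑ q : Fin m × Fin n, u hmn q * star (gv hmn ψ k q) = 1 := by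
  simp_rw [star_gv]
  rw [pairing_u hmn (fun x => star (ψ k x)) (ψ k), hψ k k, if_pos rfl]

lemma T2 (hm : 2 ≤ m) (hmn : m ≤ n) (hψ : IsONB ψ) :
    ∑ p : Fin m × Fin n, ∑ q : Fin m × Fin n,
      star (rhoM hmn q p) * piA ψ (rhoM hmn) q p = 1/(m:ℂ) := by
  have hm0 : ((m:ℂ)) ≠ 0 := Nat.cast_ne_zero.mpr (by omega)
  have hterm : ∀ p q : Fin m × Fin n, star (rhoM hmn q p) * piA ψ (rhoM hmn) q p
      = ∑ k, ((1/(m:ℂ))*(1/m)) * ((u hmn p * hv hmn ψ k p) * (u hmn q * gv hmn ψ k q)) := by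
    intro p q
    rw [star_rhoM, piA_apply, Finset.mul_sum, Finset.mul_sum]
    refine Finset.sum_congr rfl fun k _ => ?_
    simp only [rhoM, Matrix.of_apply]
    ring
  simp_rw [hterm]
  rw [sum3_factor ((1/(m:ℂ))*(1/m)) (fun k p => u hmn p * hv hmn ψ k p)
    (fun k q => u hmn q * gv hmn ψ k q)]
  simp_rw [e_hv hmn hψ, e_gv hmn hψ]
  simp
  field_simp

lemma T3 (hm : 2 ≤ m) (hmn : m ≤ n) (hψ : IsONB ψ) :
    ∑ p : Fin m × Fin n, ∑ q : Fin m × Fin n,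
      star (piA ψ (rhoM hmn) q p) * rhoM hmn q p = 1/(m:ℂ) := by
  have hm0 : ((m:ℂ)) ≠ 0 := Nat.cast_ne_zero.mpr (by omega)
  have hterm : ∀ p q : Fin m × Fin n, star (piA ψ (rhoM hmn) q p) * rhoM hmn q p
      = ∑ k, ((1/(m:ℂ))*(1/m)) * ((u hmn p * star (hv hmn ψ k p)) *
          (u hmn q * star (gv hmn ψ k q))) := by
    intro p q
    rw [piA_apply, star_mul', star_sum, Finset.mul_sum, Finset.sum_mul]
    refine Finset.sum_congr rfl fun k _ => ?_
    simp only [rhoM, Matrix.of_apply, star_mul', star_div₀, star_one, star_natCast]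
    ring
  simp_rw [hterm]
  rw [sum3_factor ((1/(m:ℂ))*(1/m)) (fun k p => u hmn p * star (hv hmn ψ k p))
    (fun k q => u hmn q * star (gv hmn ψ k q))]
  simp_rw [e_shv hmn hψ, e_sgv hmn hψ]
  simp
  field_simp

lemma P_gv (hmn : m ≤ n) (hψ : IsONB ψ) (l k : Fin m) :
    ∑ q : Fin m × Fin n, star (gv hmn ψ l q) * gv hmn ψ k q = if l = k then 1 else 0 := by
  simp_rw [star_gv]
  rw [show (∑ q : Fin m × Fin n, (∑ i, star (ψ l q.1) * ψ l i *
        (if q.2 = Fin.castLE hmn i then 1 else 0)) * gv hmn ψ k q)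
      = ∑ q : Fin m × Fin n, (∑ i, star (ψ l q.1) * ψ l i *
        (if q.2 = Fin.castLE hmn i then 1 else 0)) * (∑ i, ψ k q.1 * star (ψ k i) *
        (if q.2 = Fin.castLE hmn i then 1 else 0)) from rfl,
    pairing hmn (fun x => star (ψ l x)) (ψ l) (ψ k) (fun x => star (ψ k x)),
    hψ l k, onb2 hψ l k]
  by_cases h : l = k <;> simp [h]

lemma P_hv (hmn : m ≤ n) (hψ : IsONB ψ) (l k : Fin m) :
    ∑ p : Fin m × Fin n, star (hv hmn ψ l p) * hv hmn ψ k p = if l = k then 1 else 0 := by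
  simp_rw [star_hv]
  rw [show (∑ p : Fin m × Fin n, (∑ j, ψ l p.1 * star (ψ l j) *
        (if p.2 = Fin.castLE hmn j then 1 else 0)) * hv hmn ψ k p)
      = ∑ p : Fin m × Fin n, (∑ j, ψ l p.1 * star (ψ l j) *
        (if p.2 = Fin.castLE hmn j then 1 else 0)) * (∑ j, star (ψ k p.1) * ψ k j *
        (if p.2 = Fin.castLE hmn j then 1 else 0)) from rfl,
    pairing hmn (ψ l) (fun x => star (ψ l x)) (fun x => star (ψ k x)) (ψ k),
    onb2 hψ l k, hψ l k]
  by_cases h : l = k <;> simp [h]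

lemma T4 (hm : 2 ≤ m) (hmn : m ≤ n) (hψ : IsONB ψ) :
    ∑ p : Fin m × Fin n, ∑ q : Fin m × Fin n,
      star (piA ψ (rhoM hmn) q p) * piA ψ (rhoM hmn) q p = 1/(m:ℂ) := by
  have hm0 : ((m:ℂ)) ≠ 0 := Nat.cast_ne_zero.mpr (by omega)
  have hterm : ∀ p q : Fin m × Fin n, star (piA ψ (rhoM hmn) q p) * piA ψ (rhoM hmn) q p
      = ∑ l, ∑ k, ((1/(m:ℂ))*(1/m)) * ((star (hv hmn ψ l p) * hv hmn ψ k p) *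
          (star (gv hmn ψ l q) * gv hmn ψ k q)) := by
    intro p q
    rw [piA_apply, star_mul', star_sum, Finset.mul_sum, Finset.sum_mul]
    refine Finset.sum_congr rfl fun l _ => ?_
    rw [Finset.mul_sum, Finset.mul_sum]
    refine Finset.sum_congr rfl fun k _ => ?_
    simp only [star_mul', star_div₀, star_one, star_natCast]
    ring
  simp_rw [hterm]
  rw [sum4_factor ((1/(m:ℂ))*(1/m))
    (fun l k p => star (hv hmn ψ l p) * hv hmn ψ k p)
    (fun l k q => star (gv hmn ψ l q) * gv hmn ψ k q)]
  simp_rw [P_hv hmn hψ, P_gv hmn hψ]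
  simp [Finset.sum_ite_eq]
  field_simp

lemma hs_trace (hm : 2 ≤ m) (hmn : m ≤ n) (hψ : IsONB ψ) :
    Matrix.trace ((rhoM hmn - piA ψ (rhoM hmn))ᴴ * (rhoM hmn - piA ψ (rhoM hmn)))
      = 1 - 1/(m:ℂ) := by
  rw [Matrix.trace]
  simp only [Matrix.diag_apply, Matrix.mul_apply, Matrix.conjTranspose_apply, Matrix.sub_apply]
  simp_rw [star_sub, sub_mul, mul_sub, Finset.sum_sub_distrib]
  rw [T1 hm hmn, T2 hm hmn hψ, T3 hm hmn hψ, T4 hm hmn hψ]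
  ring

end ONB

end Stmt7Aux

theorem stmt7 (m n : ℕ) (hm : 2 ≤ m) (hmn : m ≤ n)
    (ρ : Matrix (Fin m × Fin n) (Fin m × Fin n) ℂ)
    (hρ : ρ = ((1 : ℂ) / (m : ℂ)) • ∑ i : Fin m, ∑ j : Fin m,
      (Matrix.single i j (1 : ℂ)) ⊗ₖ
      (Matrix.single (Fin.castLE hmn i) (Fin.castLE hmn j) (1 : ℂ))) :
    IsState ρ ∧ negativity ρ = 1 ∧ gd ρ = 1 ∧
      negativity ρ ^ 2 - gd ρ = 0 := by
  have hm1 : ((m:ℝ)) - 1 ≠ 0 := by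
    have : (2:ℝ) ≤ (m:ℝ) := by exact_mod_cast hm
    linarith
  have hmr : ((m:ℝ)) ≠ 0 := by
    have : (2:ℝ) ≤ (m:ℝ) := by exact_mod_cast hm
    linarith
  have hρ2 : ρ = Stmt7Aux.rhoM hmn := hρ.trans (Stmt7Aux.rho_eq hmn)
  subst hρ2
  have hneg : negativity (Stmt7Aux.rhoM hmn) = 1 := by
    rw [negativity, Stmt7Aux.traceNorm_pt hm hmn]
    rw [div_eq_one_iff_eq hm1]
  have hval : ∀ ψs : {ψ : Fin m → (Fin m → ℂ) // IsONB ψ},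
      hsNormSq (Stmt7Aux.rhoM hmn - piA ψs.1 (Stmt7Aux.rhoM hmn)) = 1 - 1/(m:ℝ) := by
    intro ψs
    rw [hsNormSq, Stmt7Aux.hs_trace hm hmn ψs.2,
      show (1 - 1/((m:ℕ):ℂ)) = (((1 - 1/(m:ℝ)):ℝ):ℂ) by push_cast; ring]
    exact Complex.ofReal_re _
  haveI hne : Nonempty {ψ : Fin m → (Fin m → ℂ) // IsONB ψ} :=
    ⟨⟨fun k i => if i = k then 1 else 0, by
      intro k l
      simp only [IsONB, apply_ite (star : ℂ → ℂ), ite_mul, star_one, star_zero, one_mul,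
        zero_mul, Finset.sum_ite_eq', Finset.mem_univ, if_true]⟩⟩
  have hgd : gd (Stmt7Aux.rhoM hmn) = 1 := by
    rw [gd, iInf_congr hval, ciInf_const]
    field_simp
  exact ⟨⟨Stmt7Aux.posSemidef_rhoM hm hmn, Stmt7Aux.trace_rhoM hm hmn⟩, hneg, hgd,
    by rw [hneg, hgd]; norm_num⟩

end
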